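/- arXiv:0710.5314 — 2 statements merged into one kernel-verified Lean document; each statement's English description precedes it below -/
import Mathlib

section
/- Let θ: [0,T) → ℝ solve the ODE θ'(t) = (e^{-θ(t)} − 1)·ω(t), where ω: [0,T) → ℝ is nonnegative, locally integrable, and satisfies ∫₀^T ω(τ) dτ = +∞. Then θ(t) → 0 as t → T. -/
open Filter MeasureTheory intervalIntegral

/-- Stabilization of the redistribution ODE θ' = (e^{-θ} - 1) ω(t) on [0,T),
with T ∈ (0,∞] possibly infinite, ω ≥ 0 locally integrable with divergent
integral: θ(t) → 0 as t → T⁻. -/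
theorem redistribution_ode_stabilization
    (T : EReal) (hT : 0 < T)
    (θ ω : ℝ → ℝ)
    (hω_nonneg : ∀ t : ℝ, 0 ≤ t → (t : EReal) < T → 0 ≤ ω t)
    (hω_loc : ∀ t : ℝ, 0 ≤ t → (t : EReal) < T → IntervalIntegrable ω volume 0 t)
    (hθ : ∀ t : ℝ, 0 ≤ t → (t : EReal) < T →
      HasDerivAt θ ((Real.exp (-θ t) - 1) * ω t) t)
    (hdiv : Tendsto (fun t : ℝ => ∫ τ in (0:ℝ)..t, ω τ)
      ((Filter.comap (fun t : ℝ => (t : EReal)) (nhdsWithin T (Set.Iio T))) ⊓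
        Filter.principal {t : ℝ | 0 ≤ t}) atTop) :
    Tendsto θ
      ((Filter.comap (fun t : ℝ => (t : EReal)) (nhdsWithin T (Set.Iio T))) ⊓
        Filter.principal {t : ℝ | 0 ≤ t}) (nhds 0) := by
  set L := (Filter.comap (fun t : ℝ => (t : EReal)) (nhdsWithin T (Set.Iio T))) ⊓
        Filter.principal {t : ℝ | 0 ≤ t} with hLdef
  set u : ℝ → ℝ := fun s => Real.exp (θ s) - 1 with hudef
  -- eventual facts along L
  have hev_nonneg : ∀ᶠ t : ℝ in L, 0 ≤ t :=
    Filter.mem_inf_of_right (Filter.mem_principal_self _)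
  have hev_lt : ∀ᶠ t : ℝ in L, (t : EReal) < T :=
    Filter.mem_inf_of_left (Filter.preimage_mem_comap self_mem_nhdsWithin)
  have hev_gt : ∀ s₀ : ℝ, (s₀ : EReal) < T → ∀ᶠ t : ℝ in L, s₀ < t := by
    intro s₀ hs₀
    have hmem : Set.Ioi (s₀ : EReal) ∈ nhdsWithin T (Set.Iio T) :=
      mem_nhdsWithin_of_mem_nhds (isOpen_Ioi.mem_nhds hs₀)
    have : {t : ℝ | (t : EReal) ∈ Set.Ioi (s₀ : EReal)} ∈ L :=
      Filter.mem_inf_of_left (Filter.preimage_mem_comap hmem)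
    filter_upwards [this] with t ht
    exact EReal.coe_lt_coe_iff.mp ht
  -- derivative of u
  have hu : ∀ s : ℝ, 0 ≤ s → (s : EReal) < T →
      HasDerivAt u (-(u s) * ω s) s := by
    intro s hs hsT
    have h := ((hθ s hs hsT).exp).sub_const 1
    refine h.congr_deriv ?_
    rw [Real.exp_neg]
    have hne : Real.exp (θ s) ≠ 0 := Real.exp_ne_zero _
    field_simp [hudef]
    rw [hudef]
    ring
  have h0T : ((0:ℝ) : EReal) < T := by rw [EReal.coe_zero]; exact hT
  by_cases hzero : ∃ s₀ : ℝ, 0 ≤ s₀ ∧ (s₀ : EReal) < T ∧ u s₀ = 0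
  · -- Case A: u hits zero, then θ = 0 from then on
    obtain ⟨s₀, hs₀0, hs₀T, hus₀⟩ := hzero
    have hclaim : ∀ t : ℝ, s₀ ≤ t → (t : EReal) < T → θ t = 0 := by
      intro t hst htT
      -- v = u² is antitone on [s₀, t]
      set v : ℝ → ℝ := fun s => (u s) ^ 2 with hvdef
      have hder : ∀ s ∈ Set.Icc s₀ t, HasDerivAt v (2 * u s ^ 1 * (-(u s) * ω s)) s := by
        intro s hs
        have hs0 : 0 ≤ s := le_trans hs₀0 hs.1
        have hsT : (s : EReal) < T :=
          lt_of_le_of_lt (EReal.coe_le_coe_iff.mpr hs.2) htT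
        exact (hu s hs0 hsT).pow 2
      have hanti : AntitoneOn v (Set.Icc s₀ t) := by
        apply antitoneOn_of_deriv_nonpos (convex_Icc s₀ t)
        · exact fun s hs => (hder s hs).continuousAt.continuousWithinAt
        · intro s hs
          rw [interior_Icc] at hs
          exact ((hder s (Set.mem_Icc_of_Ioo hs)).differentiableAt).differentiableWithinAt
        · intro s hs
          rw [interior_Icc] at hs
          have hs' := Set.mem_Icc_of_Ioo hs
          rw [(hder s hs').deriv]
          have hs0 : 0 ≤ s := le_trans hs₀0 hs'.1
          have hsT : (s : EReal) < T :=
            lt_of_le_of_lt (EReal.coe_le_coe_iff.mpr hs'.2) htT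
          have hω := hω_nonneg s hs0 hsT
          nlinarith [sq_nonneg (u s)]
      have hvt : v t ≤ 0 := by
        have := hanti ⟨le_rfl, hst⟩ ⟨hst, le_rfl⟩ hst
        simpa [hvdef, hus₀] using this
      have hvt0 : u t = 0 := by
        have h1 : (u t) ^ 2 = 0 := le_antisymm hvt (sq_nonneg _)
        exact pow_eq_zero_iff (n := 2) (by norm_num) |>.mp h1
      have : Real.exp (θ t) = 1 := by
        have := hvt0
        simp only [hudef] at this
        linarith
      have h2 := congrArg Real.log this
      rwa [Real.log_exp, Real.log_one] at h2
    have : ∀ᶠ t : ℝ in L, θ t = 0 := by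
      filter_upwards [hev_gt s₀ hs₀T, hev_lt] with t h1 h2
      exact hclaim t h1.le h2
    exact Tendsto.congr' (by filter_upwards [this] with t h using h.symm)
      tendsto_const_nhds
  · -- Case B: u never zero on the domain
    push_neg at hzero
    have hne : ∀ s : ℝ, 0 ≤ s → (s : EReal) < T → u s ≠ 0 :=
      fun s hs hsT => hzero s hs hsT
    have key : ∀ t : ℝ, 0 ≤ t → (t : EReal) < T →
        |u t| = |u 0| * Real.exp (-∫ τ in (0:ℝ)..t, ω τ) := by
      intro t ht htT
      have hmem : ∀ s ∈ Set.uIcc (0:ℝ) t, 0 ≤ s ∧ (s : EReal) < T := by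
        intro s hs
        rw [Set.uIcc_of_le ht] at hs
        exact ⟨hs.1, lt_of_le_of_lt (EReal.coe_le_coe_iff.mpr hs.2) htT⟩
      have hftc : ∫ τ in (0:ℝ)..t, -ω τ =
          Real.log (u t) - Real.log (u 0) := by
        apply intervalIntegral.integral_eq_sub_of_hasDerivAt
        · intro s hs
          obtain ⟨hs0, hsT⟩ := hmem s hs
          have hus := hne s hs0 hsT
          have hd := (hu s hs0 hsT).log hus
          have heq : (-(u s) * ω s) / (u s) = -ω s := by
            field_simp
          rwa [heq] at hd
        · exact (hω_loc t ht htT).neg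
      rw [intervalIntegral.integral_neg] at hftc
      have hlog : Real.log (u t) = Real.log (u 0) + (-∫ τ in (0:ℝ)..t, ω τ) := by
        linarith
      calc |u t| = Real.exp (Real.log (u t)) :=
            (Real.exp_log_eq_abs (hne t ht htT)).symm
        _ = Real.exp (Real.log (u 0) + (-∫ τ in (0:ℝ)..t, ω τ)) := by rw [hlog]
        _ = |u 0| * Real.exp (-∫ τ in (0:ℝ)..t, ω τ) := by
            rw [Real.exp_add, Real.exp_log_eq_abs (hne 0 le_rfl h0T)]
    -- the right-hand side tends to 0
    have hRHS : Tendsto (fun t : ℝ => |u 0| * Real.exp (-∫ τ in (0:ℝ)..t, ω τ)) L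
        (nhds 0) := by
      have h1 : Tendsto (fun t : ℝ => Real.exp (-∫ τ in (0:ℝ)..t, ω τ)) L (nhds 0) :=
        Real.tendsto_exp_atBot.comp (tendsto_neg_atTop_atBot.comp hdiv)
      simpa using h1.const_mul |u 0|
    have habs : Tendsto (fun t : ℝ => |u t|) L (nhds 0) := by
      apply hRHS.congr'
      filter_upwards [hev_nonneg, hev_lt] with t h1 h2
      exact (key t h1 h2).symm
    have hu0 : Tendsto u L (nhds 0) :=
      squeeze_zero_norm' (Filter.Eventually.of_forall fun t =>
        le_of_eq (Real.norm_eq_abs (u t))) habs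
    -- θ t = log (1 + u t)
    have hc : ContinuousAt (fun x : ℝ => Real.log (1 + x)) 0 := by
      apply (Real.continuousAt_log (by norm_num : (1:ℝ) + 0 ≠ 0)).comp
      fun_prop
    have hcomp : Tendsto (fun t : ℝ => Real.log (1 + u t)) L (nhds 0) := by
      have := hc.tendsto.comp hu0
      rw [add_zero, Real.log_one] at this
      exact this
    apply hcomp.congr
    intro t
    have : (1 : ℝ) + u t = Real.exp (θ t) := by simp [hudef]
    rw [this, Real.log_exp]
end

section
/- Suppose g: S¹ × [0,T) → (0,∞) satisfies ∂_t g = −g·A(t) + (L(t) − g)·ω(t) with A, ω continuous, ω ≥ 0, ∫₀^T ω = +∞, L(t) = ∫₀¹ g(u,t) du, and g, L remain positive on [0,T). Then sup_{u ∈ S¹} |g(u,t)/L(t) − 1| → 0 as t → T. -/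
open Filter MeasureTheory intervalIntegral

/-- FTC helper: right derivative (within `Ici x`) of a primitive of a function
continuous on `Ico 0 T`, at points of `Ico 0 T`. -/
private lemma aux_ftc_right {f : ℝ → ℝ} {T x : ℝ}
    (hf : ContinuousOn f (Set.Ico 0 T)) (hx : x ∈ Set.Ico (0:ℝ) T) :
    HasDerivWithinAt (fun t => ∫ τ in (0:ℝ)..t, f τ) (f x) (Set.Ici x) x := by
  have hmem : Set.Ico (0:ℝ) T ∈ nhdsWithin x (Set.Ioi x) := by
    have h1 : Set.Iio T ∈ nhds x := Iio_mem_nhds hx.2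
    have h2 := Filter.inter_mem (mem_nhdsWithin_of_mem_nhds h1)
      (self_mem_nhdsWithin (a := x) (s := Set.Ioi x))
    refine Filter.mem_of_superset h2 ?_
    rintro y ⟨hy1, hy2⟩
    exact ⟨le_trans hx.1 (le_of_lt hy2), hy1⟩
  have hint : IntervalIntegrable f volume 0 x := by
    apply ContinuousOn.intervalIntegrable
    rw [Set.uIcc_of_le hx.1]
    exact hf.mono (Set.Icc_subset_Ico_right hx.2)
  have hmeas : StronglyMeasurableAtFilter f (nhdsWithin x (Set.Ioi x)) :=
    ⟨Set.Ico 0 T, hmem, hf.aestronglyMeasurable measurableSet_Ico⟩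
  exact intervalIntegral.integral_hasDerivWithinAt_right hint hmeas
    ((hf x hx).mono_of_mem_nhdsWithin hmem)

/-- Constancy helper on `[0, T)` from vanishing right derivatives. -/
private lemma aux_const {f : ℝ → ℝ} {T : ℝ}
    (hcont : ∀ b ∈ Set.Ico (0:ℝ) T, ContinuousOn f (Set.Icc 0 b))
    (hderiv : ∀ x ∈ Set.Ico (0:ℝ) T, HasDerivWithinAt f 0 (Set.Ici x) x) :
    ∀ t ∈ Set.Ico (0:ℝ) T, f t = f 0 := by
  intro t ht
  exact constant_of_has_deriv_right_zero (hcont t ht)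
    (fun x hx => hderiv x ⟨hx.1, lt_trans hx.2 ht.2⟩) t ⟨ht.1, le_refl t⟩

/-- Uniform asymptotic redistribution: if ∂ₜg = -g A(t) + (L - g)ω(t) with
L(t) = ∫₀¹ g du, ω ≥ 0, ∫₀^T ω = +∞, g and L positive, and g(·,0) continuous
and 1-periodic, then sup_u |g(u,t)/L(t) - 1| → 0 as t → T⁻. -/
theorem uniform_redistribution_limit
    (T : ℝ) (hT : 0 < T)
    (g : ℝ → ℝ → ℝ) (L A ω : ℝ → ℝ)
    (hL : ∀ t ∈ Set.Ico (0:ℝ) T, L t = ∫ u in (0:ℝ)..1, g u t)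
    (hA : ContinuousOn A (Set.Ico 0 T))
    (hω : ContinuousOn ω (Set.Ico 0 T))
    (hω_nonneg : ∀ t ∈ Set.Ico (0:ℝ) T, 0 ≤ ω t)
    (hdiv : Tendsto (fun t : ℝ => ∫ τ in (0:ℝ)..t, ω τ)
      (nhdsWithin T (Set.Iio T)) atTop)
    (hgpos : ∀ (u : ℝ), ∀ t ∈ Set.Ico (0:ℝ) T, 0 < g u t)
    (hLpos : ∀ t ∈ Set.Ico (0:ℝ) T, 0 < L t)
    (hg0cont : Continuous fun u => g u 0)
    (hgper : ∀ (u : ℝ), ∀ t ∈ Set.Ico (0:ℝ) T, g (u + 1) t = g u t)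
    (hg : ∀ (u : ℝ), ∀ t ∈ Set.Ico (0:ℝ) T,
      HasDerivAt (fun t => g u t) (-(g u t) * A t + (L t - g u t) * ω t) t) :
    Tendsto (fun t : ℝ => ⨆ u : Set.Icc (0:ℝ) 1, |g u t / L t - 1|)
      (nhdsWithin T (Set.Iio T)) (nhds 0) := by
  haveI : Nonempty (Set.Icc (0:ℝ) 1) := ⟨⟨0, by norm_num⟩⟩
  set Φ : ℝ → ℝ := fun t => ∫ τ in (0:ℝ)..t, (A τ + ω τ) with hΦdef
  set Av : ℝ → ℝ := fun t => ∫ τ in (0:ℝ)..t, A τ with hAvdef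
  set W : ℝ → ℝ := fun t => ∫ τ in (0:ℝ)..t, ω τ with hWdef
  have hAω : ContinuousOn (fun τ => A τ + ω τ) (Set.Ico 0 T) := hA.add hω
  have hΦd : ∀ x ∈ Set.Ico (0:ℝ) T,
      HasDerivWithinAt Φ (A x + ω x) (Set.Ici x) x := fun x hx => aux_ftc_right hAω hx
  have hAvd : ∀ x ∈ Set.Ico (0:ℝ) T,
      HasDerivWithinAt Av (A x) (Set.Ici x) x := fun x hx => aux_ftc_right hA hx
  -- continuity of primitives on Icc 0 b
  have hΦc : ∀ b ∈ Set.Ico (0:ℝ) T, ContinuousOn Φ (Set.Icc 0 b) := by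
    intro b hb
    have := intervalIntegral.continuousOn_primitive_interval
      (a := (0:ℝ)) (b := b) (f := fun τ => A τ + ω τ) (μ := volume) ?_
    · rwa [Set.uIcc_of_le hb.1] at this
    · rw [Set.uIcc_of_le hb.1]
      exact (hAω.mono (Set.Icc_subset_Ico_right hb.2)).integrableOn_Icc
  have hAvc : ∀ b ∈ Set.Ico (0:ℝ) T, ContinuousOn Av (Set.Icc 0 b) := by
    intro b hb
    have := intervalIntegral.continuousOn_primitive_interval
      (a := (0:ℝ)) (b := b) (f := A) (μ := volume) ?_
    · rwa [Set.uIcc_of_le hb.1] at this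
    · rw [Set.uIcc_of_le hb.1]
      exact (hA.mono (Set.Icc_subset_Ico_right hb.2)).integrableOn_Icc
  have hgc : ∀ u : ℝ, ∀ b ∈ Set.Ico (0:ℝ) T, ContinuousOn (fun t => g u t) (Set.Icc 0 b) := by
    intro u b hb x hx
    exact ((hg u x ⟨hx.1, lt_of_le_of_lt hx.2 hb.2⟩).continuousAt).continuousWithinAt
  have hT0 : (0:ℝ) ∈ Set.Ico (0:ℝ) T := ⟨le_refl 0, hT⟩
  have hΦ0 : Φ 0 = 0 := intervalIntegral.integral_same
  have hAv0 : Av 0 = 0 := intervalIntegral.integral_same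
  -- Key 1 : difference formula
  have key1 : ∀ u v : ℝ, ∀ t ∈ Set.Ico (0:ℝ) T,
      g u t - g v t = (g u 0 - g v 0) * Real.exp (-(Φ t)) := by
    intro u v t ht
    have hF : ∀ x ∈ Set.Ico (0:ℝ) T,
        HasDerivWithinAt (fun s => (g u s - g v s) * Real.exp (Φ s)) 0 (Set.Ici x) x := by
      intro x hx
      have h1 : HasDerivWithinAt (fun s => g u s - g v s)
          ((-(g u x) * A x + (L x - g u x) * ω x) -
            (-(g v x) * A x + (L x - g v x) * ω x)) (Set.Ici x) x :=
        ((hg u x hx).sub (hg v x hx)).hasDerivWithinAt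
      have h2 : HasDerivWithinAt (fun s => Real.exp (Φ s))
          (Real.exp (Φ x) * (A x + ω x)) (Set.Ici x) x := (hΦd x hx).exp
      refine (h1.mul h2).congr_deriv ?_
      ring
    have hFc : ∀ b ∈ Set.Ico (0:ℝ) T,
        ContinuousOn (fun s => (g u s - g v s) * Real.exp (Φ s)) (Set.Icc 0 b) := by
      intro b hb
      exact ((hgc u b hb).sub (hgc v b hb)).mul
        (Real.continuous_exp.comp_continuousOn (hΦc b hb))
    have hconst := aux_const hFc hF t ht
    rw [hΦ0, Real.exp_zero, mul_one] at hconst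
    rw [Real.exp_neg, eq_mul_inv_iff_mul_eq₀ (Real.exp_ne_zero _)]
    exact hconst
  -- formula for g u t in terms of g 0 t
  have gform : ∀ u : ℝ, ∀ t ∈ Set.Ico (0:ℝ) T,
      g u t = g 0 t + (g u 0 - g 0 0) * Real.exp (-(Φ t)) := by
    intro u t ht
    have := key1 u 0 t ht
    linarith
  -- formula for L
  have Lform : ∀ t ∈ Set.Ico (0:ℝ) T,
      L t = g 0 t + (L 0 - g 0 0) * Real.exp (-(Φ t)) := by
    intro t ht
    have hcongr : Set.EqOn (fun v => g v t)
        (fun v => g 0 t + (g v 0 - g 0 0) * Real.exp (-(Φ t))) (Set.uIcc (0:ℝ) 1) :=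
      fun v _ => gform v t ht
    have hint1 : IntervalIntegrable (fun v : ℝ => g 0 t) volume 0 1 :=
      intervalIntegrable_const
    have hint2 : IntervalIntegrable
        (fun v => (g v 0 - g 0 0) * Real.exp (-(Φ t))) volume 0 1 :=
      (((hg0cont.sub continuous_const).mul continuous_const)).intervalIntegrable 0 1
    have hint3 : IntervalIntegrable (fun v => g v 0) volume 0 1 :=
      hg0cont.intervalIntegrable 0 1
    rw [hL t ht, intervalIntegral.integral_congr hcongr,
      intervalIntegral.integral_add hint1 hint2,
      intervalIntegral.integral_const,
      intervalIntegral.integral_mul_const,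
      intervalIntegral.integral_sub hint3 intervalIntegrable_const,
      intervalIntegral.integral_const, ← hL 0 hT0]
    simp
  -- L satisfies L' = -L A
  have hnhds : ∀ x ∈ Set.Ico (0:ℝ) T, Set.Ico (0:ℝ) T ∈ nhdsWithin x (Set.Ici x) := by
    intro x hx
    have h1 : Set.Iio T ∈ nhds x := Iio_mem_nhds hx.2
    have h2 := Filter.inter_mem (mem_nhdsWithin_of_mem_nhds h1)
      (self_mem_nhdsWithin (a := x) (s := Set.Ici x))
    refine Filter.mem_of_superset h2 ?_
    rintro y ⟨hy1, hy2⟩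
    exact ⟨le_trans hx.1 hy2, hy1⟩
  have hLd : ∀ x ∈ Set.Ico (0:ℝ) T, HasDerivWithinAt L (-(L x) * A x) (Set.Ici x) x := by
    intro x hx
    have h1 : HasDerivWithinAt (fun s => g 0 s + (L 0 - g 0 0) * Real.exp (-(Φ s)))
        ((-(g 0 x) * A x + (L x - g 0 x) * ω x) +
          (L 0 - g 0 0) * (Real.exp (-(Φ x)) * -(A x + ω x))) (Set.Ici x) x :=
      (hg 0 x hx).hasDerivWithinAt.add (((hΦd x hx).neg).exp.const_mul _)
    have heq : L =ᶠ[nhdsWithin x (Set.Ici x)]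
        (fun s => g 0 s + (L 0 - g 0 0) * Real.exp (-(Φ s))) :=
      Filter.eventuallyEq_of_mem (hnhds x hx) (fun s hs => Lform s hs)
    have h2 := h1.congr_of_eventuallyEq heq (Lform x hx)
    refine h2.congr_deriv ?_
    have h3 : (L 0 - g 0 0) * Real.exp (-(Φ x)) = L x - g 0 x := by
      have := Lform x hx; linarith
    linear_combination -(A x + ω x) * h3
  have hLf : ∀ t ∈ Set.Ico (0:ℝ) T, L t = L 0 * Real.exp (-(Av t)) := by
    intro t ht
    have hN : ∀ x ∈ Set.Ico (0:ℝ) T,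
        HasDerivWithinAt (fun s => L s * Real.exp (Av s)) 0 (Set.Ici x) x := by
      intro x hx
      refine ((hLd x hx).mul ((hAvd x hx).exp)).congr_deriv ?_
      ring
    have hLc : ∀ b ∈ Set.Ico (0:ℝ) T, ContinuousOn L (Set.Icc 0 b) := by
      intro b hb
      have hform : ContinuousOn (fun s => g 0 s + (L 0 - g 0 0) * Real.exp (-(Φ s)))
          (Set.Icc 0 b) :=
        (hgc 0 b hb).add (continuousOn_const.mul
          (Real.continuous_exp.comp_continuousOn (hΦc b hb).neg))
      exact hform.congr (fun s hs => Lform s ⟨hs.1, lt_of_le_of_lt hs.2 hb.2⟩)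
    have hNc : ∀ b ∈ Set.Ico (0:ℝ) T,
        ContinuousOn (fun s => L s * Real.exp (Av s)) (Set.Icc 0 b) := by
      intro b hb
      exact (hLc b hb).mul (Real.continuous_exp.comp_continuousOn (hAvc b hb))
    have hconst := aux_const hNc hN t ht
    rw [hAv0, Real.exp_zero, mul_one] at hconst
    rw [Real.exp_neg, eq_mul_inv_iff_mul_eq₀ (Real.exp_ne_zero _)]
    exact hconst
  -- split Φ = Av + W
  have hsplit : ∀ t ∈ Set.Ico (0:ℝ) T, Φ t = Av t + W t := by
    intro t ht
    have hsub : Set.uIcc (0:ℝ) t ⊆ Set.Ico 0 T := by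
      rw [Set.uIcc_of_le ht.1]
      exact Set.Icc_subset_Ico_right ht.2
    exact intervalIntegral.integral_add
      ((hA.mono hsub).intervalIntegrable) ((hω.mono hsub).intervalIntegrable)
  have hL0 : 0 < L 0 := hLpos 0 hT0
  -- main pointwise formula
  have hmain : ∀ t ∈ Set.Ico (0:ℝ) T, ∀ u : ℝ,
      |g u t / L t - 1| = |g u 0 - L 0| / L 0 * Real.exp (-(W t)) := by
    intro t ht u
    have hLt : 0 < L t := hLpos t ht
    have h1 : g u t - L t = (g u 0 - L 0) * Real.exp (-(Φ t)) := by
      linear_combination gform u t ht - Lform t ht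
    have hE : Real.exp (-(Φ t)) = Real.exp (-(Av t)) * Real.exp (-(W t)) := by
      rw [hsplit t ht, neg_add, Real.exp_add]
    have hval : g u t / L t - 1 = (g u 0 - L 0) / L 0 * Real.exp (-(W t)) := by
      rw [div_sub_one hLt.ne', h1, hE, hLf t ht]
      field_simp
    rw [hval, abs_mul, abs_div, abs_of_pos hL0, abs_of_pos (Real.exp_pos _)]
  -- uniform bound at time 0
  obtain ⟨C, hC⟩ := (isCompact_Icc (a := (0:ℝ)) (b := 1)).exists_bound_of_continuousOn
    (((hg0cont.sub (continuous_const : Continuous fun _ : ℝ => L 0)).continuousOn) :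
      ContinuousOn (fun u : ℝ => g u 0 - L 0) (Set.Icc 0 1))
  have hev : ∀ᶠ t in nhdsWithin T (Set.Iio T), t ∈ Set.Ico (0:ℝ) T := by
    have h1 : Set.Ioo (0:ℝ) T ∈ nhdsWithin T (Set.Iio T) :=
      Ioo_mem_nhdsLT_of_mem ⟨hT, le_refl T⟩
    exact Filter.eventually_of_mem h1 (fun y hy => ⟨le_of_lt hy.1, hy.2⟩)
  have hupper : ∀ᶠ t in nhdsWithin T (Set.Iio T),
      (⨆ u : Set.Icc (0:ℝ) 1, |g u t / L t - 1|) ≤ C / L 0 * Real.exp (-(W t)) := by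
    refine hev.mono (fun t ht => ?_)
    refine ciSup_le (fun u => ?_)
    rw [hmain t ht u]
    have hCu : |g (u:ℝ) 0 - L 0| ≤ C := by
      have := hC u u.2
      rwa [Real.norm_eq_abs] at this
    gcongr
  have hlower : ∀ᶠ t in nhdsWithin T (Set.Iio T),
      0 ≤ ⨆ u : Set.Icc (0:ℝ) 1, |g u t / L t - 1| :=
    Filter.Eventually.of_forall (fun t => Real.iSup_nonneg (fun u => abs_nonneg _))
  have hB : Tendsto (fun t => C / L 0 * Real.exp (-(W t)))
      (nhdsWithin T (Set.Iio T)) (nhds 0) := by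
    have h1 : Tendsto (fun t => -(W t)) (nhdsWithin T (Set.Iio T)) atBot :=
      tendsto_neg_atBot_iff.mpr hdiv
    have h2 : Tendsto (fun t => Real.exp (-(W t))) (nhdsWithin T (Set.Iio T)) (nhds 0) :=
      Real.tendsto_exp_atBot.comp h1
    simpa using h2.const_mul (C / L 0)
  exact squeeze_zero' hlower hupper hB
end
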